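/- Proposition 1 (identification of DATT(g,t), not-yet-treated comparison, degenerate covariates): Suppose the parallel-gaps assumption based on the not-yet-treated group holds: E[Y_t(∞) − Y_{g−1}(∞) | G=g, S_s] − E[Y_t(∞) − Y_{g−1}(∞) | G=g, S_{s'}] = E[Y_t(∞) − Y_{g−1}(∞) | G>t, S_s] − E[Y_t(∞) − Y_{g−1}(∞) | G>t, S_{s'}]. Then DATT(g,t) = (E[Y_t − Y_{g−1} | G=g, S_s] − E[Y_t − Y_{g−1} | G=g, S_{s'}]) − (E[Y_t − Y_{g−1} | G>t, S_s] − E[Y_t − Y_{g−1} | G>t, S_{s'}]), where Y_τ denotes the observed outcome at period τ. -/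

import Mathlib

open MeasureTheory ProbabilityTheory
open scoped Classical

lemma my_ae_restrict_congr {Ω : Type*} [MeasurableSpace Ω] (μ : Measure Ω)
    {s : Set Ω} {f h : Ω → ℝ}
    (hf : AEStronglyMeasurable f μ) (hh : AEStronglyMeasurable h μ)
    (heq : ∀ ω ∈ s, f ω = h ω) : f =ᵐ[μ.restrict s] h := by
  obtain ⟨f', hf', hff'⟩ := hf
  obtain ⟨h', hh', hhh'⟩ := hh
  have hD' : MeasurableSet {ω | f' ω ≠ h' ω} :=
    (measurableSet_eq_fun hf'.measurable hh'.measurable).compl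
  have hN : μ ({ω | f ω ≠ f' ω} ∪ {ω | h ω ≠ h' ω}) = 0 := by
    refine measure_union_null ?_ ?_
    · exact hff'
    · exact hhh'
  have hsub : {ω | f ω ≠ h ω} ⊆ {ω | f' ω ≠ h' ω} ∪ ({ω | f ω ≠ f' ω} ∪ {ω | h ω ≠ h' ω}) := by
    intro ω hω
    by_cases h1 : f ω = f' ω
    · by_cases h2 : h ω = h' ω
      · left; simp only [Set.mem_setOf_eq] at *; rw [← h1, ← h2]; exact hω
      · right; right; exact h2
    · right; left; exact h1
  have h1 : (μ.restrict s) {ω | f' ω ≠ h' ω} = μ ({ω | f' ω ≠ h' ω} ∩ s) :=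
    Measure.restrict_apply hD'
  have h2 : {ω | f' ω ≠ h' ω} ∩ s ⊆ {ω | f ω ≠ f' ω} ∪ {ω | h ω ≠ h' ω} := by
    intro ω ⟨hω1, hω2⟩
    by_contra hc
    simp only [Set.mem_union, Set.mem_setOf_eq, not_or] at hc
    push_neg at hc
    exact hω1 (by rw [← hc.1, ← hc.2, heq ω hω2])
  have key : μ.restrict s {ω | f ω ≠ h ω} = 0 := by
    refine le_antisymm ?_ (by positivity)
    calc μ.restrict s {ω | f ω ≠ h ω}
        ≤ μ.restrict s ({ω | f' ω ≠ h' ω} ∪ ({ω | f ω ≠ f' ω} ∪ {ω | h ω ≠ h' ω})) :=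
          measure_mono hsub
      _ ≤ μ.restrict s {ω | f' ω ≠ h' ω} + μ.restrict s ({ω | f ω ≠ f' ω} ∪ {ω | h ω ≠ h' ω}) :=
          measure_union_le _ _
      _ ≤ μ ({ω | f ω ≠ f' ω} ∪ {ω | h ω ≠ h' ω}) + μ ({ω | f ω ≠ f' ω} ∪ {ω | h ω ≠ h' ω}) :=
          add_le_add (h1 ▸ measure_mono h2) (Measure.restrict_le_self _)
      _ = 0 := by rw [hN]; simp
  exact key


/-- Proposition 1 (identification of `DATT(g,t)`, not-yet-treated comparison,
degenerate covariates). `G` is the cohort variable (`⊤` = never treated),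
`Ss` is subgroup `s`, `Ssᶜ` is subgroup `s'`. `Y τ γ` is the potential outcome
`Y_τ(γ)` and `Yobs τ` is the observed outcome at period `τ`. -/
theorem datt_identification_not_yet_treated
    {Ω : Type*} [MeasurableSpace Ω] (μ : Measure Ω) [IsProbabilityMeasure μ]
    (T : ℕ) (hT : 1 ≤ T)
    (G : Ω → ℕ∞) (hGrange : ∀ ω, G ω = ⊤ ∨ (1 ≤ G ω ∧ G ω ≤ (T : ℕ∞)))
    (Ss : Set Ω)
    (Y : ℕ → ℕ∞ → Ω → ℝ)
    (hIntY : ∀ τ γ, Integrable (Y τ γ) μ)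
    (Yobs : ℕ → Ω → ℝ)
    (hYobs : ∀ τ ω, Yobs τ ω = if G ω ≤ (τ : ℕ∞) then Y τ (G ω) ω else Y τ ⊤ ω)
    (hIntYobs : ∀ τ, Integrable (Yobs τ) μ)
    (g t : ℕ) (hg1 : 1 ≤ g) (hgt : g ≤ t) (htT : t ≤ T)
    (hpos1 : 0 < μ ({ω | G ω = (g : ℕ∞)} ∩ Ss))
    (hpos2 : 0 < μ ({ω | G ω = (g : ℕ∞)} ∩ Ssᶜ))
    (hpos3 : 0 < μ ({ω | (t : ℕ∞) < G ω} ∩ Ss))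
    (hpos4 : 0 < μ ({ω | (t : ℕ∞) < G ω} ∩ Ssᶜ))
    -- Parallel gaps based on the not-yet-treated group
    (hPG : (∫ ω, (Y t ⊤ ω - Y (g-1) ⊤ ω) ∂(μ[|{ω | G ω = (g : ℕ∞)} ∩ Ss]))
          - (∫ ω, (Y t ⊤ ω - Y (g-1) ⊤ ω) ∂(μ[|{ω | G ω = (g : ℕ∞)} ∩ Ssᶜ]))
        = (∫ ω, (Y t ⊤ ω - Y (g-1) ⊤ ω) ∂(μ[|{ω | (t : ℕ∞) < G ω} ∩ Ss]))
          - (∫ ω, (Y t ⊤ ω - Y (g-1) ⊤ ω) ∂(μ[|{ω | (t : ℕ∞) < G ω} ∩ Ssᶜ]))) :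
    -- DATT(g,t) equals the triple-difference of observed outcomes
    (∫ ω, (Y t (g : ℕ∞) ω - Y t ⊤ ω) ∂(μ[|{ω | G ω = (g : ℕ∞)} ∩ Ss]))
      - (∫ ω, (Y t (g : ℕ∞) ω - Y t ⊤ ω) ∂(μ[|{ω | G ω = (g : ℕ∞)} ∩ Ssᶜ]))
    = ((∫ ω, (Yobs t ω - Yobs (g-1) ω) ∂(μ[|{ω | G ω = (g : ℕ∞)} ∩ Ss]))
        - (∫ ω, (Yobs t ω - Yobs (g-1) ω) ∂(μ[|{ω | G ω = (g : ℕ∞)} ∩ Ssᶜ])))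
      - ((∫ ω, (Yobs t ω - Yobs (g-1) ω) ∂(μ[|{ω | (t : ℕ∞) < G ω} ∩ Ss]))
        - (∫ ω, (Yobs t ω - Yobs (g-1) ω) ∂(μ[|{ω | (t : ℕ∞) < G ω} ∩ Ssᶜ]))) := by
  -- pointwise identities for observed outcomes
  have hgt' : ((g : ℕ∞)) ≤ (t : ℕ∞) := by exact_mod_cast hgt
  have hEqg : ∀ ω, G ω = (g : ℕ∞) →
      Yobs t ω - Yobs (g-1) ω = Y t (g : ℕ∞) ω - Y (g-1) ⊤ ω := by
    intro ω hω
    rw [hYobs t ω, hYobs (g-1) ω, hω]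
    rw [if_pos hgt', if_neg ?_]
    intro hle
    have : g ≤ g - 1 := by exact_mod_cast hle
    omega
  have hEqnyt : ∀ ω, (t : ℕ∞) < G ω →
      Yobs t ω - Yobs (g-1) ω = Y t ⊤ ω - Y (g-1) ⊤ ω := by
    intro ω hω
    rw [hYobs t ω, hYobs (g-1) ω, if_neg (not_le.mpr hω), if_neg ?_]
    intro hle
    have h1 : ((g-1 : ℕ) : ℕ∞) ≤ (t : ℕ∞) := by exact_mod_cast (by omega : g - 1 ≤ t)
    exact absurd (lt_of_le_of_lt (hle.trans h1) hω) (lt_irrefl _)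
  -- congruence of integrals under conditional measures
  have hcond : ∀ (s : Set Ω) (f h : Ω → ℝ), (f =ᵐ[μ.restrict s] h) →
      ∫ ω, f ω ∂(μ[|s]) = ∫ ω, h ω ∂(μ[|s]) := by
    intro s f h hfh
    simp only [ProbabilityTheory.cond]
    exact integral_congr_ae (Measure.ae_smul_measure hfh _)
  have hmObs : AEStronglyMeasurable (fun ω => Yobs t ω - Yobs (g-1) ω) μ :=
    ((hIntYobs t).sub (hIntYobs (g-1))).aestronglyMeasurable
  have hmg : AEStronglyMeasurable (fun ω => Y t (g : ℕ∞) ω - Y (g-1) ⊤ ω) μ :=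
    ((hIntY t (g : ℕ∞)).sub (hIntY (g-1) ⊤)).aestronglyMeasurable
  have hmnyt : AEStronglyMeasurable (fun ω => Y t ⊤ ω - Y (g-1) ⊤ ω) μ :=
    ((hIntY t ⊤).sub (hIntY (g-1) ⊤)).aestronglyMeasurable
  have hObs1 : ∫ ω, (Yobs t ω - Yobs (g-1) ω) ∂(μ[|{ω | G ω = (g : ℕ∞)} ∩ Ss])
      = ∫ ω, (Y t (g : ℕ∞) ω - Y (g-1) ⊤ ω) ∂(μ[|{ω | G ω = (g : ℕ∞)} ∩ Ss]) :=
    hcond _ _ _ (my_ae_restrict_congr μ hmObs hmg fun ω hω => hEqg ω hω.1)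
  have hObs2 : ∫ ω, (Yobs t ω - Yobs (g-1) ω) ∂(μ[|{ω | G ω = (g : ℕ∞)} ∩ Ssᶜ])
      = ∫ ω, (Y t (g : ℕ∞) ω - Y (g-1) ⊤ ω) ∂(μ[|{ω | G ω = (g : ℕ∞)} ∩ Ssᶜ]) :=
    hcond _ _ _ (my_ae_restrict_congr μ hmObs hmg fun ω hω => hEqg ω hω.1)
  have hObs3 : ∫ ω, (Yobs t ω - Yobs (g-1) ω) ∂(μ[|{ω | (t : ℕ∞) < G ω} ∩ Ss])
      = ∫ ω, (Y t ⊤ ω - Y (g-1) ⊤ ω) ∂(μ[|{ω | (t : ℕ∞) < G ω} ∩ Ss]) :=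
    hcond _ _ _ (my_ae_restrict_congr μ hmObs hmnyt fun ω hω => hEqnyt ω hω.1)
  have hObs4 : ∫ ω, (Yobs t ω - Yobs (g-1) ω) ∂(μ[|{ω | (t : ℕ∞) < G ω} ∩ Ssᶜ])
      = ∫ ω, (Y t ⊤ ω - Y (g-1) ⊤ ω) ∂(μ[|{ω | (t : ℕ∞) < G ω} ∩ Ssᶜ]) :=
    hcond _ _ _ (my_ae_restrict_congr μ hmObs hmnyt fun ω hω => hEqnyt ω hω.1)
  -- splitting the DATT integrand
  have hsplit : ∀ (s : Set Ω), μ s ≠ 0 →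
      ∫ ω, (Y t (g : ℕ∞) ω - Y t ⊤ ω) ∂(μ[|s])
      = (∫ ω, (Y t (g : ℕ∞) ω - Y (g-1) ⊤ ω) ∂(μ[|s]))
        - ∫ ω, (Y t ⊤ ω - Y (g-1) ⊤ ω) ∂(μ[|s]) := by
    intro s hs
    have hc : (μ s)⁻¹ ≠ ⊤ := ENNReal.inv_ne_top.mpr hs
    have hi1 : Integrable (fun ω => Y t (g : ℕ∞) ω - Y (g-1) ⊤ ω) (μ[|s]) := by
      simp only [ProbabilityTheory.cond]
      exact (((hIntY t (g : ℕ∞)).sub (hIntY (g-1) ⊤)).restrict).smul_measure hc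
    have hi2 : Integrable (fun ω => Y t ⊤ ω - Y (g-1) ⊤ ω) (μ[|s]) := by
      simp only [ProbabilityTheory.cond]
      exact (((hIntY t ⊤).sub (hIntY (g-1) ⊤)).restrict).smul_measure hc
    rw [← integral_sub hi1 hi2]
    congr 1
    funext ω
    ring
  rw [hObs1, hObs2, hObs3, hObs4,
    hsplit _ hpos1.ne', hsplit _ hpos2.ne']
  linarith [hPG]
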